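/- arXiv:1305.3154 — 2 statements merged into one kernel-verified Lean document; each statement's English description precedes it below -/
import Mathlib

section
/- Let d ≥ 2 be an integer, Q ∈ (1,2) and p ∈ (1,2). Let (s_k)_{k≥1} and (M_k)_{k≥1} be sequences of positive integers with 3 ≤ M_k ≤ s_k for all k, s_k → ∞, M_k → ∞ and (M_k · log s_k)/s_k → 0, and let (s̃_k)_{k≥1} be a sequence of real numbers with s̃_k ≥ s_k for all k and (s̃_k − s̃_{k−1})/s_k → 0. Define w_k = Q^{−(s₁ + s₂ + ⋯ + s_k)}. Suppose (c_k)_{k≥1} is a sequence of positive real numbers satisfying c_k ≤ 2(M_k + 1)·(4·s_k^{2+2d})^{M_k}·Q^{s_k}·c_{k−1} for all k ≥ 2. Then c_k·(w_k)^p·Q^{p·s̃_k} → 0 as k → ∞; in particular, the sequence c_k·(w_k)^p·Q^{p·s_k} is bounded. -/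
open Filter Set

/-- Here the index `k : ℕ` plays the role of `k+1` in the informal statement, i.e.
`s 0 = s₁`, `M 0 = M₁`, `st 0 = s̃₁`, `w 0 = w₁ = Q^{-s₁}`, `c 0 = c₁`. -/
theorem stmt5 (d : ℕ) (hd : 2 ≤ d) (Q p : ℝ) (hQ : Q ∈ Set.Ioo (1:ℝ) 2)
    (hp : p ∈ Set.Ioo (1:ℝ) 2)
    (s M : ℕ → ℕ)
    (hM3 : ∀ k, 3 ≤ M k) (hMs : ∀ k, M k ≤ s k)
    (hs_lim : Tendsto (fun k => (s k : ℝ)) atTop atTop)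
    (hM_lim : Tendsto (fun k => (M k : ℝ)) atTop atTop)
    (hMlog : Tendsto (fun k => (M k : ℝ) * Real.log (s k) / (s k)) atTop (nhds 0))
    (st : ℕ → ℝ) (hst : ∀ k, (s k : ℝ) ≤ st k)
    (hst_diff : Tendsto (fun k => (st (k + 1) - st k) / (s (k + 1) : ℝ)) atTop (nhds 0))
    (w : ℕ → ℝ)
    (hw : ∀ k, w k = Q ^ (-(∑ i ∈ Finset.range (k + 1), (s i : ℝ))))
    (c : ℕ → ℝ) (hc_pos : ∀ k, 0 < c k)
    (hc : ∀ k : ℕ, c (k + 1) ≤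
      2 * ((M (k + 1) : ℝ) + 1) * (4 * (s (k + 1) : ℝ) ^ (2 + 2 * d)) ^ (M (k + 1)) *
        Q ^ ((s (k + 1) : ℝ)) * c k) :
    Tendsto (fun k => c k * (w k) ^ p * Q ^ (p * st k)) atTop (nhds 0) ∧
    ∃ H : ℝ, ∀ k, c k * (w k) ^ p * Q ^ (p * (s k : ℝ)) ≤ H := by
  obtain ⟨hQ1, hQ2⟩ := hQ
  obtain ⟨hp1, hp2⟩ := hp
  have hQ0 : (0:ℝ) < Q := by linarith
  have hlogQ : 0 < Real.log Q := Real.log_pos hQ1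
  have hs3 : ∀ k, (3:ℝ) ≤ (s k : ℝ) := by
    intro k; exact_mod_cast (hM3 k).trans (hMs k)
  have hs0 : ∀ k, (0:ℝ) < (s k : ℝ) := fun k => lt_of_lt_of_le (by norm_num) (hs3 k)
  set S : ℕ → ℝ := fun k => ∑ i ∈ Finset.range (k + 1), (s i : ℝ) with hSdef
  set a : ℕ → ℝ := fun k => c k * Q ^ (p * (st k - S k)) with hadef
  have ha_pos : ∀ k, 0 < a k := fun k => mul_pos (hc_pos k) (Real.rpow_pos_of_pos hQ0 _)
  have hfun : ∀ k, c k * (w k) ^ p * Q ^ (p * st k) = a k := by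
    intro k
    rw [hw k, ← Real.rpow_mul hQ0.le, mul_assoc, ← Real.rpow_add hQ0, hadef]
    rw [show (-(S k)) * p + p * st k = p * (st k - S k) by ring]
  -- the ratio bound
  set B : ℕ → ℝ := fun k =>
    2 * ((M (k + 1) : ℝ) + 1) * (4 * (s (k + 1) : ℝ) ^ (2 + 2 * d)) ^ (M (k + 1)) *
      Q ^ ((1 - p) * (s (k + 1) : ℝ) + p * (st (k + 1) - st k)) with hBdef
  have hP_pos : ∀ k, (0:ℝ) < 4 * (s (k + 1) : ℝ) ^ (2 + 2 * d) :=
    fun k => mul_pos (by norm_num) (pow_pos (hs0 _) _)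
  have hB_pos : ∀ k, 0 < B k := by
    intro k
    exact mul_pos (mul_pos (mul_pos two_pos (by positivity)) (pow_pos (hP_pos k) _))
      (Real.rpow_pos_of_pos hQ0 _)
  have hSsucc : ∀ k, S (k + 1) = S k + (s (k + 1) : ℝ) := by
    intro k; simp [hSdef, Finset.sum_range_succ]
  have key : ∀ k, a (k + 1) ≤ B k * a k := by
    intro k
    have h1 : a (k + 1) ≤
        2 * ((M (k + 1) : ℝ) + 1) * (4 * (s (k + 1) : ℝ) ^ (2 + 2 * d)) ^ (M (k + 1)) *
          Q ^ ((s (k + 1) : ℝ)) * c k * Q ^ (p * (st (k + 1) - S (k + 1))) := by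
      exact mul_le_mul_of_nonneg_right (hc k) (Real.rpow_pos_of_pos hQ0 _).le
    refine h1.trans_eq ?_
    rw [hSsucc k]
    set E := 2 * ((M (k + 1) : ℝ) + 1) * (4 * (s (k + 1) : ℝ) ^ (2 + 2 * d)) ^ (M (k + 1))
    have hexp : ((s (k + 1) : ℝ)) + p * (st (k + 1) - (S k + (s (k + 1) : ℝ)))
        = ((1 - p) * (s (k + 1) : ℝ) + p * (st (k + 1) - st k)) + p * (st k - S k) := by ring
    calc E * Q ^ ((s (k + 1) : ℝ)) * c k * Q ^ (p * (st (k + 1) - (S k + (s (k + 1) : ℝ))))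
        = E * c k * Q ^ (((s (k + 1) : ℝ)) + p * (st (k + 1) - (S k + (s (k + 1) : ℝ)))) := by
          rw [Real.rpow_add hQ0]; ring
      _ = E * c k * Q ^ ((((1 - p) * (s (k + 1) : ℝ) + p * (st (k + 1) - st k))) + p * (st k - S k)) := by
          rw [hexp]
      _ = B k * a k := by rw [Real.rpow_add hQ0]; ring
  -- limit computations (shifted index)
  have hs' : Tendsto (fun k => (s (k + 1) : ℝ)) atTop atTop :=
    (Filter.tendsto_add_atTop_iff_nat 1).2 hs_lim
  have hMlog' : Tendsto (fun k => (M (k + 1) : ℝ) * Real.log (s (k + 1)) / (s (k + 1) : ℝ))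
      atTop (nhds 0) := (Filter.tendsto_add_atTop_iff_nat 1).2 hMlog
  have hlog' : Tendsto (fun k => Real.log (s (k + 1) : ℝ)) atTop atTop :=
    Real.tendsto_log_atTop.comp hs'
  have hinv : Tendsto (fun k => ((s (k + 1) : ℝ))⁻¹) atTop (nhds 0) :=
    hs'.inv_tendsto_atTop
  have hMdiv : Tendsto (fun k => (M (k + 1) : ℝ) / (s (k + 1) : ℝ)) atTop (nhds 0) := by
    have h1 : ∀ᶠ k in atTop, (1:ℝ) ≤ Real.log (s (k + 1) : ℝ) := hlog'.eventually_ge_atTop 1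
    refine tendsto_of_tendsto_of_tendsto_of_le_of_le' tendsto_const_nhds hMlog'
      (Eventually.of_forall fun k => by positivity) (h1.mono fun k hk => ?_)
    rw [div_le_div_iff_of_pos_right (hs0 (k + 1))]
    nlinarith [show (0:ℝ) ≤ (M (k + 1) : ℝ) from Nat.cast_nonneg _]
  have hlogdiv : Tendsto (fun k => Real.log (s (k + 1) : ℝ) / (s (k + 1) : ℝ)) atTop (nhds 0) := by
    refine tendsto_of_tendsto_of_tendsto_of_le_of_le' tendsto_const_nhds hMlog'
      (Eventually.of_forall fun k => ?_) (Eventually.of_forall fun k => ?_)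
    · have : (0:ℝ) ≤ Real.log (s (k + 1) : ℝ) :=
        Real.log_nonneg (by linarith [hs3 (k + 1)])
      positivity
    · rw [div_le_div_iff_of_pos_right (hs0 (k + 1))]
      have hM1 : (3:ℝ) ≤ (M (k + 1) : ℝ) := by exact_mod_cast hM3 (k + 1)
      have : (0:ℝ) ≤ Real.log (s (k + 1) : ℝ) :=
        Real.log_nonneg (by linarith [hs3 (k + 1)])
      nlinarith
  have hlogM : Tendsto (fun k => Real.log ((M (k + 1) : ℝ) + 1) / (s (k + 1) : ℝ))
      atTop (nhds 0) := by
    have hub : Tendsto (fun k => Real.log 2 * ((s (k + 1) : ℝ))⁻¹ +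
        Real.log (s (k + 1) : ℝ) / (s (k + 1) : ℝ)) atTop (nhds 0) := by
      simpa using (hinv.const_mul (Real.log 2)).add hlogdiv
    refine tendsto_of_tendsto_of_tendsto_of_le_of_le' tendsto_const_nhds hub
      (Eventually.of_forall fun k => ?_) (Eventually.of_forall fun k => ?_)
    · have h0 : (1:ℝ) ≤ (M (k + 1) : ℝ) + 1 := by
        have : (0:ℝ) ≤ (M (k + 1) : ℝ) := Nat.cast_nonneg _
        linarith
      exact div_nonneg (Real.log_nonneg h0) (hs0 (k + 1)).le
    · have hM1 : (M (k + 1) : ℝ) ≤ (s (k + 1) : ℝ) := by exact_mod_cast hMs (k + 1)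
      have hle : Real.log ((M (k + 1) : ℝ) + 1) ≤ Real.log 2 + Real.log (s (k + 1) : ℝ) := by
        rw [← Real.log_mul (by norm_num) (ne_of_gt (hs0 (k + 1)))]
        apply Real.log_le_log (by positivity)
        nlinarith [hs3 (k + 1)]
      have h2 : Real.log ((M (k + 1) : ℝ) + 1) / (s (k + 1) : ℝ) ≤
          (Real.log 2 + Real.log (s (k + 1) : ℝ)) / (s (k + 1) : ℝ) := by
        exact (div_le_div_iff_of_pos_right (hs0 (k + 1))).2 hle
      refine h2.trans_eq ?_
      field_simp
  -- log B k / s (k+1) computation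
  have hlogB : ∀ k, Real.log (B k) =
      Real.log 2 + Real.log ((M (k + 1) : ℝ) + 1) +
        (M (k + 1) : ℝ) * (Real.log 4 + ((2:ℝ) + 2 * d) * Real.log (s (k + 1) : ℝ)) +
        ((1 - p) * (s (k + 1) : ℝ) + p * (st (k + 1) - st k)) * Real.log Q := by
    intro k
    rw [hBdef]
    rw [Real.log_mul (ne_of_gt (mul_pos (mul_pos two_pos (by positivity)) (pow_pos (hP_pos k) _))) (ne_of_gt (Real.rpow_pos_of_pos hQ0 _)),
      Real.log_mul (by positivity) (ne_of_gt (pow_pos (hP_pos k) _)),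
      Real.log_mul (by norm_num) (by positivity),
      Real.log_pow, Real.log_mul (by norm_num) (ne_of_gt (pow_pos (hs0 _) _)),
      Real.log_pow, Real.log_rpow hQ0]
    push_cast
    ring
  set G : ℕ → ℝ := fun k =>
    Real.log 2 / (s (k + 1) : ℝ) + Real.log ((M (k + 1) : ℝ) + 1) / (s (k + 1) : ℝ) +
      Real.log 4 * ((M (k + 1) : ℝ) / (s (k + 1) : ℝ)) +
      ((2:ℝ) + 2 * d) * ((M (k + 1) : ℝ) * Real.log (s (k + 1) : ℝ) / (s (k + 1) : ℝ)) +
      ((1 - p) + p * ((st (k + 1) - st k) / (s (k + 1) : ℝ))) * Real.log Q with hGdef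
  have hGlim : Tendsto G atTop (nhds ((1 - p) * Real.log Q)) := by
    have t1 : Tendsto (fun k => Real.log 2 / (s (k + 1) : ℝ)) atTop (nhds 0) := by
      simpa [div_eq_mul_inv] using hinv.const_mul (Real.log 2)
    have t3 : Tendsto (fun k => Real.log 4 * ((M (k + 1) : ℝ) / (s (k + 1) : ℝ)))
        atTop (nhds 0) := by simpa using hMdiv.const_mul (Real.log 4)
    have t4 : Tendsto (fun k => ((2:ℝ) + 2 * d) *
        ((M (k + 1) : ℝ) * Real.log (s (k + 1) : ℝ) / (s (k + 1) : ℝ))) atTop (nhds 0) := by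
      simpa using hMlog'.const_mul ((2:ℝ) + 2 * d)
    have t5 : Tendsto (fun k => ((1 - p) + p * ((st (k + 1) - st k) / (s (k + 1) : ℝ))) *
        Real.log Q) atTop (nhds ((1 - p) * Real.log Q)) := by
      have := (((hst_diff.const_mul p).const_add (1 - p)).mul_const (Real.log Q))
      simpa using this
    have := ((((t1.add hlogM).add t3).add t4).add t5)
    simpa using this
  have hBlog : Tendsto (fun k => Real.log (B k) / (s (k + 1) : ℝ)) atTop
      (nhds ((1 - p) * Real.log Q)) := by
    refine hGlim.congr fun k => ?_
    rw [hGdef]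
    rw [hlogB k]
    have hsk : (s (k + 1) : ℝ) ≠ 0 := ne_of_gt (hs0 (k + 1))
    field_simp
    ring
  -- eventual geometric decay
  set r := Real.exp (((1 - p) / 2 * Real.log Q) * 3) with hrdef
  have hr0 : 0 < r := Real.exp_pos _
  have hr1 : r < 1 := by
    rw [hrdef]
    have : ((1 - p) / 2 * Real.log Q) * 3 < 0 := by nlinarith
    calc Real.exp (((1 - p) / 2 * Real.log Q) * 3) < Real.exp 0 := Real.exp_lt_exp.2 this
      _ = 1 := Real.exp_zero
  have hhalf : (1 - p) * Real.log Q < (1 - p) / 2 * Real.log Q := by nlinarith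
  obtain ⟨N, hN⟩ := (eventually_atTop.1 (hBlog.eventually_lt_const hhalf))
  have hBr : ∀ k, N ≤ k → B k ≤ r := by
    intro k hk
    have h1 := hN k hk
    have h2 : Real.log (B k) < (1 - p) / 2 * Real.log Q * (s (k + 1) : ℝ) :=
      (div_lt_iff₀ (hs0 (k + 1))).1 h1
    have h3 : (1 - p) / 2 * Real.log Q * (s (k + 1) : ℝ) ≤ ((1 - p) / 2 * Real.log Q) * 3 := by
      have hc1 : (0:ℝ) ≤ (p - 1) / 2 * Real.log Q := mul_nonneg (by linarith) hlogQ.le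
      nlinarith [hs3 (k + 1)]
    have h4 : Real.log (B k) ≤ ((1 - p) / 2 * Real.log Q) * 3 := le_of_lt (h2.trans_le h3)
    calc B k = Real.exp (Real.log (B k)) := (Real.exp_log (hB_pos k)).symm
      _ ≤ r := Real.exp_le_exp.2 h4
  have hratio : ∀ k, N ≤ k → a (k + 1) ≤ r * a k := by
    intro k hk
    exact (key k).trans (mul_le_mul_of_nonneg_right (hBr k hk) (ha_pos k).le)
  have hgeo : ∀ m, a (N + m) ≤ r ^ m * a N := by
    intro m
    induction m with
    | zero => simp
    | succ m ih =>
      have h1 : a (N + m + 1) ≤ r * a (N + m) := hratio (N + m) (Nat.le_add_right N m)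
      calc a (N + (m + 1)) = a (N + m + 1) := by ring_nf
        _ ≤ r * a (N + m) := h1
        _ ≤ r * (r ^ m * a N) := mul_le_mul_of_nonneg_left ih hr0.le
        _ = r ^ (m + 1) * a N := by ring
  have haTendsto : Tendsto a atTop (nhds 0) := by
    have hub : Tendsto (fun k => (a N / r ^ N) * r ^ k) atTop (nhds 0) := by
      have := (tendsto_pow_atTop_nhds_zero_of_lt_one hr0.le hr1).const_mul (a N / r ^ N)
      simpa using this
    refine tendsto_of_tendsto_of_tendsto_of_le_of_le' tendsto_const_nhds hub
      (Eventually.of_forall fun k => (ha_pos k).le) ?_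
    rw [eventually_atTop]
    refine ⟨N, fun k hk => ?_⟩
    obtain ⟨m, rfl⟩ := Nat.exists_eq_add_of_le hk
    have h1 := hgeo m
    have h2 : (a N / r ^ N) * r ^ (N + m) = r ^ m * a N := by
      rw [pow_add]
      field_simp
    rw [h2]
    exact h1
  have hmain : Tendsto (fun k => c k * (w k) ^ p * Q ^ (p * st k)) atTop (nhds 0) :=
    haTendsto.congr fun k => (hfun k).symm
  refine ⟨hmain, ?_⟩
  obtain ⟨H, hH⟩ := hmain.bddAbove_range
  refine ⟨H, fun k => ?_⟩
  have hw_pos : 0 < w k := by rw [hw k]; exact Real.rpow_pos_of_pos hQ0 _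
  have h1 : c k * (w k) ^ p * Q ^ (p * (s k : ℝ)) ≤ c k * (w k) ^ p * Q ^ (p * st k) := by
    apply mul_le_mul_of_nonneg_left
    · exact Real.rpow_le_rpow_of_exponent_le hQ1.le
        (mul_le_mul_of_nonneg_left (hst k) (by linarith))
    · exact mul_nonneg (hc_pos k).le (Real.rpow_nonneg hw_pos.le p)
  exact h1.trans (hH (Set.mem_range_self k))
end

section
/- Let W ⊆ ℝ^d be a nonempty set and let x ∈ W be a porosity point of W, i.e. there exists λ > 0 such that for every r > 0 there is a point y with 0 < ‖y − x‖ < r and B(y, λ‖y − x‖) ∩ W = ∅, where B(y, ρ) is the open ball of radius ρ. Then the function f : ℝ^d → ℝ given by f(z) = dist(z, W) is 1-Lipschitz and is not Fréchet differentiable at x. -/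
open Filter Metric Set

theorem stmt9 (d : ℕ) (W : Set (EuclideanSpace ℝ (Fin d))) (hW : W.Nonempty)
    (x : EuclideanSpace ℝ (Fin d)) (hx : x ∈ W)
    (hpor : ∃ lam : ℝ, 0 < lam ∧ ∀ r : ℝ, 0 < r →
      ∃ y : EuclideanSpace ℝ (Fin d), 0 < ‖y - x‖ ∧ ‖y - x‖ < r ∧
        Metric.ball y (lam * ‖y - x‖) ∩ W = ∅) :
    LipschitzWith 1 (fun z : EuclideanSpace ℝ (Fin d) => Metric.infDist z W) ∧
    ¬ DifferentiableAt ℝ (fun z : EuclideanSpace ℝ (Fin d) => Metric.infDist z W) x := by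
  refine ⟨Metric.lipschitz_infDist_pt W, ?_⟩
  intro hdiff
  obtain ⟨lam, hlam, hpor⟩ := hpor
  have hfx : Metric.infDist x W = 0 := Metric.infDist_zero_of_mem hx
  have hmin : IsLocalMin (fun z => Metric.infDist z W) x :=
    Filter.Eventually.of_forall fun y => by
      simpa [hfx] using Metric.infDist_nonneg (x := y) (s := W)
  have hzero := hmin.hasFDerivAt_eq_zero hdiff.hasFDerivAt
  have hF : HasFDerivAt (fun z => Metric.infDist z W) (0 : EuclideanSpace ℝ (Fin d) →L[ℝ] ℝ) x := by
    rw [← hzero]; exact hdiff.hasFDerivAt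
  rw [hasFDerivAt_iff_isLittleO_nhds_zero] at hF
  have := hF.def (half_pos hlam)
  rw [Metric.eventually_nhds_iff] at this
  obtain ⟨ε, hε, hball⟩ := this
  obtain ⟨y, hy0, hyε, hyW⟩ := hpor ε hε
  have hle := hball (y := y - x) (by simpa using hyε)
  simp only [hfx, ContinuousLinearMap.zero_apply, sub_zero, add_sub_cancel] at hle
  have hlow : lam * ‖y - x‖ ≤ Metric.infDist y W := by
    by_contra h
    push_neg at h
    obtain ⟨w, hw, hdw⟩ := (Metric.infDist_lt_iff hW).mp h
    have : w ∈ Metric.ball y (lam * ‖y - x‖) ∩ W :=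
      ⟨by simpa [Metric.mem_ball, dist_comm] using hdw, hw⟩
    simp [hyW] at this
  have habs : ‖Metric.infDist y W‖ = Metric.infDist y W :=
    Real.norm_of_nonneg Metric.infDist_nonneg
  rw [habs] at hle
  have : lam * ‖y - x‖ ≤ lam / 2 * ‖y - x‖ := hlow.trans hle
  nlinarith
end
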